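/- Fix an integer m ≥ 1. The ℤ-submodule of F spanned by all restriction elements r(λ), λ ∈ ℤ^m_+, together with all elements e_{(μ+(1,…,1), p+2)} − e_{(μ,p)} for (μ,p) ∈ ℤ^{m−1}_+ × ℤ, is the whole of F. (Equivalently: for G = SU(1,n) the restriction map Res : K⁰(K) → K⁰(K_M) of Grothendieck groups of representations is surjective; in particular every highest weight is good. Theorem A(1).) -/

import Mathlib

open scoped Classical

/-- `ℤ^k_+`: weakly decreasing integer tuples of length `k`. -/
abbrev ZP (k : ℕ) : Type := {μ : Fin k → ℤ // ∀ i j : Fin k, i ≤ j → μ j ≤ μ i}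

/-- The free `ℤ`-module `F = K⁰(K_M)` on the basis `ℤ^{m-1}_+ × ℤ`
(here `m = m0 + 1`, so the tuples have length `m0`). -/
abbrev FSU1 (m0 : ℕ) : Type := (ZP m0 × ℤ) →₀ ℤ

/-- The restriction element `r(λ) = Σ_{μ ⊆ λ} e_{(μ, |λ|−|μ|)}`, where `μ ⊆ λ`
means the interlacing `λ_1 ≥ μ_1 ≥ λ_2 ≥ … ≥ λ_m` (the class of `π_λ|_{K_M}`). -/
noncomputable def rEl (m0 : ℕ) (l : Fin (m0 + 1) → ℤ) : FSU1 m0 :=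
  ∑ μ ∈ Finset.Icc (fun i : Fin m0 => l i.succ) (fun i : Fin m0 => l i.castSucc),
    if h : ∀ i j : Fin m0, i ≤ j → μ j ≤ μ i then
      Finsupp.single ((⟨μ, h⟩ : ZP m0), (∑ i, l i) - ∑ i, μ i) 1
    else 0

/-- The generating set. -/
def genSet (m0 : ℕ) : Set (FSU1 m0) :=
  {x : FSU1 m0 | ∃ l : Fin (m0 + 1) → ℤ,
      (∀ i j : Fin (m0 + 1), i ≤ j → l j ≤ l i) ∧ x = rEl m0 l} ∪
    {x : FSU1 m0 | ∃ (μ : ZP m0) (p : ℤ),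
      x = Finsupp.single
            ((⟨fun i => μ.1 i + 1, fun i j hij => by
                exact add_le_add_left (μ.2 i j hij) 1⟩ : ZP m0), p + 2) 1
          - Finsupp.single (μ, p) 1}

noncomputable def Sp (m0 : ℕ) : Submodule ℤ (FSU1 m0) := Submodule.span ℤ (genSet m0)

/-- Add `k` to every entry. -/
def addK (m0 : ℕ) (μ : ZP m0) (k : ℤ) : ZP m0 :=
  ⟨fun i => μ.1 i + k, fun i j h => add_le_add_left (μ.2 i j h) k⟩

lemma gen_mem (m0 : ℕ) (μ : ZP m0) (p : ℤ) :
    Finsupp.single (addK m0 μ 1, p + 2) 1 - Finsupp.single (μ, p) 1 ∈ Sp m0 :=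
  Submodule.subset_span (Or.inr ⟨μ, p, rfl⟩)

lemma shiftA (m0 : ℕ) (k : ℕ) : ∀ (μ : ZP m0) (p : ℤ),
    Finsupp.single (addK m0 μ (k : ℤ), p + 2 * (k : ℤ)) 1 ∈ Sp m0 →
    Finsupp.single (μ, p) 1 ∈ Sp m0 := by
  induction k with
  | zero =>
    intro μ p h
    have e : ((addK m0 μ ((0 : ℕ) : ℤ), p + 2 * ((0 : ℕ) : ℤ)) : ZP m0 × ℤ) = (μ, p) := by
      refine Prod.ext (Subtype.ext (funext fun i => ?_)) ?_
      · show μ.1 i + ((0 : ℕ) : ℤ) = μ.1 i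
        push_cast; ring
      · push_cast; ring
    rw [e] at h
    exact h
  | succ k ih =>
    intro μ p h
    have e1 : addK m0 μ ((k + 1 : ℕ) : ℤ) = addK m0 (addK m0 μ 1) (k : ℤ) :=
      Subtype.ext (funext fun i => by simp [addK]; ring)
    have e2 : p + 2 * ((k + 1 : ℕ) : ℤ) = (p + 2) + 2 * (k : ℤ) := by push_cast; ring
    rw [e1, e2] at h
    have h2 := ih (addK m0 μ 1) (p + 2) h
    have h3 := gen_mem m0 μ p
    have e3 : (Finsupp.single (μ, p) 1 : FSU1 m0)
        = Finsupp.single (addK m0 μ 1, p + 2) 1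
          - (Finsupp.single (addK m0 μ 1, p + 2) 1 - Finsupp.single (μ, p) 1) :=
      (sub_sub_cancel _ _).symm
    rw [e3]
    exact sub_mem h2 h3

lemma shiftB (m0 : ℕ) (k : ℕ) : ∀ (μ : ZP m0) (p : ℤ),
    Finsupp.single (μ, p) 1 ∈ Sp m0 →
    Finsupp.single (addK m0 μ (k : ℤ), p + 2 * (k : ℤ)) 1 ∈ Sp m0 := by
  induction k with
  | zero =>
    intro μ p h
    have e : ((addK m0 μ ((0 : ℕ) : ℤ), p + 2 * ((0 : ℕ) : ℤ)) : ZP m0 × ℤ) = (μ, p) := by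
      refine Prod.ext (Subtype.ext (funext fun i => ?_)) ?_
      · show μ.1 i + ((0 : ℕ) : ℤ) = μ.1 i
        push_cast; ring
      · push_cast; ring
    rw [e]
    exact h
  | succ k ih =>
    intro μ p h
    have h2 := ih μ p h
    have h3 := gen_mem m0 (addK m0 μ (k : ℤ)) (p + 2 * (k : ℤ))
    have e1 : addK m0 (addK m0 μ (k : ℤ)) 1 = addK m0 μ ((k + 1 : ℕ) : ℤ) :=
      Subtype.ext (funext fun i => by simp [addK]; ring)
    have e2 : p + 2 * (k : ℤ) + 2 = p + 2 * ((k + 1 : ℕ) : ℤ) := by push_cast; ring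
    rw [e1, e2] at h3
    have e3 : (Finsupp.single (addK m0 μ ((k + 1 : ℕ) : ℤ), p + 2 * ((k + 1 : ℕ) : ℤ)) 1 : FSU1 m0)
        = (Finsupp.single (addK m0 μ ((k + 1 : ℕ) : ℤ), p + 2 * ((k + 1 : ℕ) : ℤ)) 1
            - Finsupp.single (addK m0 μ (k : ℤ), p + 2 * (k : ℤ)) 1)
          + Finsupp.single (addK m0 μ (k : ℤ), p + 2 * (k : ℤ)) 1 :=
      (sub_add_cancel _ _).symm
    rw [e3]
    exact add_mem h3 h2

lemma shiftZ (m0 : ℕ) (k : ℤ) (μ : ZP m0) (p : ℤ)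
    (h : Finsupp.single (addK m0 μ k, p + 2 * k) 1 ∈ Sp m0) :
    Finsupp.single (μ, p) 1 ∈ Sp m0 := by
  rcases le_or_gt 0 k with hk | hk
  · lift k to ℕ using hk with j
    exact shiftA m0 j μ p h
  · set j : ℕ := (-k).toNat with hj
    have hjk : (j : ℤ) = -k := by omega
    have h2 := shiftB m0 j (addK m0 μ k) (p + 2 * k) h
    have e1 : addK m0 (addK m0 μ k) (j : ℤ) = μ :=
      Subtype.ext (funext fun i => by simp [addK]; omega)
    have e2 : p + 2 * k + 2 * (j : ℤ) = p := by omega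
    rw [e1, e2] at h2
    exact h2

/-- The measure used for the induction. -/
def msr (n0 : ℕ) (ν : Fin (n0 + 1) → ℤ) : ℤ :=
  (∑ i, ν i) - (n0 + 1) * ν ⟨n0, Nat.lt_succ_self n0⟩

lemma msr_nonneg (n0 : ℕ) (ν : Fin (n0 + 1) → ℤ)
    (h : ∀ i j : Fin (n0 + 1), i ≤ j → ν j ≤ ν i) : 0 ≤ msr n0 ν := by
  have h1 : ∑ _i : Fin (n0 + 1), ν ⟨n0, Nat.lt_succ_self n0⟩ ≤ ∑ i, ν i :=
    Finset.sum_le_sum fun i _ => h i ⟨n0, Nat.lt_succ_self n0⟩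
      (by simp [Fin.le_def]; omega)
  rw [Finset.sum_const, Finset.card_univ, Fintype.card_fin, nsmul_eq_mul] at h1
  unfold msr
  push_cast at h1 ⊢
  linarith

lemma msr_addK (n0 : ℕ) (μ : ZP (n0 + 1)) (k : ℤ) :
    msr n0 (addK (n0 + 1) μ k).1 = msr n0 μ.1 := by
  unfold msr addK
  simp [Finset.sum_add_distrib, Finset.card_univ]
  ring

lemma key (n0 : ℕ) : ∀ n : ℕ, ∀ (μ : ZP (n0 + 1)) (p : ℤ),
    msr n0 μ.1 ≤ (n : ℤ) → Finsupp.single (μ, p) 1 ∈ Sp (n0 + 1) := by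
  intro n
  induction n using Nat.strong_induction_on with
  | _ n IH =>
  intro μ p hn
  set last : Fin (n0 + 1) := ⟨n0, Nat.lt_succ_self n0⟩ with hlast
  set k : ℤ := μ.1 last - p with hk
  set μ' : ZP (n0 + 1) := addK (n0 + 1) μ k with hμ'
  set l : Fin (n0 + 2) → ℤ := fun i => μ'.1 ⟨min i.1 n0, by omega⟩ with hl
  have hldec : ∀ i j : Fin (n0 + 2), i ≤ j → l j ≤ l i := by
    intro i j hij
    exact μ'.2 _ _ (by simp only [Fin.le_def] at hij ⊢; omega)
  set lo : Fin (n0 + 1) → ℤ := fun i => l i.succ with hlo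
  set hi : Fin (n0 + 1) → ℤ := fun i => l i.castSucc with hhi
  have hhieq : hi = μ'.1 := by
    funext i
    have e : (⟨min i.castSucc.1 n0, by omega⟩ : Fin (n0 + 1)) = i :=
      Fin.ext (show min i.castSucc.1 n0 = i.1 from by
        have h1 : i.castSucc.1 = i.1 := rfl
        have := i.isLt
        omega)
    calc hi i = μ'.1 ⟨min i.castSucc.1 n0, by omega⟩ := rfl
      _ = μ'.1 i := by rw [e]
  have hloeq : ∀ i : Fin (n0 + 1), lo i = μ'.1 ⟨min (i.1 + 1) n0, by omega⟩ := fun i => rfl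
  set T : (Fin (n0 + 1) → ℤ) → FSU1 (n0 + 1) := fun ν =>
    if h : ∀ i j : Fin (n0 + 1), i ≤ j → ν j ≤ ν i then
      Finsupp.single ((⟨ν, h⟩ : ZP (n0 + 1)), (∑ i, l i) - ∑ i, ν i) 1
    else 0 with hT
  have hrEl : rEl (n0 + 1) l = ∑ ν ∈ Finset.Icc lo hi, T ν := rfl
  have hr : rEl (n0 + 1) l ∈ Sp (n0 + 1) :=
    Submodule.subset_span (Or.inl ⟨l, hldec, rfl⟩)
  have hmemtop : μ'.1 ∈ Finset.Icc lo hi := by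
    rw [Finset.mem_Icc]
    constructor
    · intro i
      rw [hloeq i]
      exact μ'.2 _ _ (by have := i.isLt; simp [Fin.le_def]; omega)
    · rw [hhieq]
  have hsuml : ∑ i : Fin (n0 + 2), l i = (∑ i, μ'.1 i) + μ'.1 last := by
    rw [Fin.sum_univ_castSucc]
    congr 1
    · exact Finset.sum_congr rfl fun i _ => congrFun hhieq i
    · have e : (⟨min (Fin.last (n0 + 1)).1 n0, by omega⟩ : Fin (n0 + 1)) = last :=
        Fin.ext (show min (Fin.last (n0 + 1)).1 n0 = n0 from by
          have h1 : (Fin.last (n0 + 1)).1 = n0 + 1 := rfl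
          omega)
      calc l (Fin.last (n0 + 1)) = μ'.1 ⟨min (Fin.last (n0 + 1)).1 n0, by omega⟩ := rfl
        _ = μ'.1 last := by rw [e]
  have hTtop : T μ'.1 = Finsupp.single (μ', μ'.1 last) 1 := by
    simp only [hT]
    rw [dif_pos μ'.2]
    congr 1
    refine Prod.ext rfl ?_
    simp only [hsuml]
    ring
  have hmain : Finsupp.single (μ', μ'.1 last) 1
      = rEl (n0 + 1) l - ∑ ν ∈ (Finset.Icc lo hi).erase μ'.1, T ν := by
    rw [hrEl, ← Finset.add_sum_erase _ T hmemtop, hTtop]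
    abel
  have hrest : ∀ ν ∈ (Finset.Icc lo hi).erase μ'.1, T ν ∈ Sp (n0 + 1) := by
    intro ν hν
    obtain ⟨hne, hmem⟩ := Finset.mem_erase.mp hν
    rw [Finset.mem_Icc] at hmem
    obtain ⟨hm1, hm2⟩ := hmem
    rw [hhieq] at hm2
    by_cases h : ∀ i j : Fin (n0 + 1), i ≤ j → ν j ≤ ν i
    · simp only [hT]
      rw [dif_pos h]
      have h0 : 0 ≤ msr n0 ν := msr_nonneg n0 ν h
      have hνlast : ν last = μ'.1 last := by
        have hu : ν last ≤ μ'.1 last := hm2 last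
        have hd : μ'.1 last ≤ ν last := by
          have := hm1 last
          rw [hloeq last] at this
          have e : (⟨min (last.1 + 1) n0, by omega⟩ : Fin (n0 + 1)) = last :=
            Fin.ext (by simp [hlast])
          rwa [e] at this
        exact le_antisymm hu hd
      have hsum : ∑ i, ν i < ∑ i, μ'.1 i := by
        obtain ⟨i0, hi0⟩ := Function.ne_iff.mp hne
        refine Finset.sum_lt_sum (fun i _ => hm2 i) ⟨i0, Finset.mem_univ i0, ?_⟩
        exact lt_of_le_of_ne (hm2 i0) hi0
      have h2 : msr n0 ν < msr n0 μ'.1 := by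
        unfold msr
        rw [hνlast]
        exact sub_lt_sub_right hsum _
      have h3 : msr n0 μ'.1 = msr n0 μ.1 := msr_addK n0 μ k
      refine IH (msr n0 ν).toNat (by omega) ⟨ν, h⟩ _ ?_
      show msr n0 ν ≤ ((msr n0 ν).toNat : ℤ)
      omega
    · simp only [hT]
      rw [dif_neg h]
      exact zero_mem _
  have hfin : Finsupp.single (μ', μ'.1 last) 1 ∈ Sp (n0 + 1) := by
    rw [hmain]
    exact sub_mem hr (Submodule.sum_mem _ hrest)
  apply shiftZ (n0 + 1) k μ p
  have e : ((addK (n0 + 1) μ k, p + 2 * k) : ZP (n0 + 1) × ℤ) = (μ', μ'.1 last) := by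
    refine Prod.ext rfl ?_
    show p + 2 * k = μ.1 last + k
    omega
  rw [e]
  exact hfin

lemma single_mem (m0 : ℕ) (a : ZP m0 × ℤ) : Finsupp.single a 1 ∈ Sp m0 := by
  obtain ⟨μ, p⟩ := a
  cases m0 with
  | zero =>
    have hdec : ∀ i j : Fin 1, i ≤ j → (fun _ : Fin 1 => p) j ≤ (fun _ : Fin 1 => p) i :=
      fun _ _ _ => le_refl _
    have hr : rEl 0 (fun _ => p) ∈ Sp 0 :=
      Submodule.subset_span (Or.inl ⟨fun _ => p, hdec, rfl⟩)
    have he : rEl 0 (fun _ => p) = Finsupp.single (μ, p) 1 := by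
      rw [rEl]
      have hab : (fun i : Fin 0 => (fun _ : Fin 1 => p) i.succ)
          = (fun i : Fin 0 => (fun _ : Fin 1 => p) i.castSucc) := funext fun i => i.elim0
      rw [hab, Finset.Icc_self, Finset.sum_singleton]
      rw [dif_pos (fun i => i.elim0)]
      congr 1
      refine Prod.ext ?_ ?_
      · exact Subtype.ext (funext fun i => i.elim0)
      · simp
    rw [← he]
    exact hr
  | succ n0 =>
    exact key n0 (msr n0 μ.1).toNat μ p (Int.self_le_toNat _)

theorem su_1n_restriction_surjective (m0 : ℕ) :
    Submodule.span ℤ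
      ({x : FSU1 m0 | ∃ l : Fin (m0 + 1) → ℤ,
          (∀ i j : Fin (m0 + 1), i ≤ j → l j ≤ l i) ∧ x = rEl m0 l} ∪
        {x : FSU1 m0 | ∃ (μ : ZP m0) (p : ℤ),
          x = Finsupp.single
                ((⟨fun i => μ.1 i + 1, fun i j hij => by
                    exact add_le_add_left (μ.2 i j hij) 1⟩ : ZP m0), p + 2) 1
              - Finsupp.single (μ, p) 1}) = ⊤ := by
  show Sp m0 = ⊤
  rw [eq_top_iff]
  rintro f -
  induction f using Finsupp.induction with
  | zero => exact zero_mem _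
  | single_add a b f _ _ ih =>
    refine add_mem ?_ ih
    have : Finsupp.single a b = b • Finsupp.single a 1 := by
      rw [Finsupp.smul_single, smul_eq_mul, mul_one]
    rw [this]
    exact Submodule.smul_mem _ _ (single_mem m0 a)
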